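/- Fix an integer t ≥ 1 and let π = (x_1 ≤ x_2 ≤ ... ≤ x_l) be a partition of t into l ≥ 1 positive parts; set x_{l+1} = t. For a partition σ of t, let M(π,σ) be the number of (l+1)-tuples (y_1,...,y_{l+1}) of nonnegative integers with y_i ≤ x_i for each i and y_1 + ... + y_{l+1} = t, such that the multiset of nonzero values among x_1 − y_1, ..., x_{l+1} − y_{l+1} equals the multiset of parts of σ. Then for every integer n ≥ 2, f(π,n) = Σ_σ M(π,σ)·f(σ,n−1), where the sum is over all partitions σ of t. -/

import Mathlib

/-- For a partition `π` of `t` of length `l = π.parts.card`, `xval π` is the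
`(l+1)`-tuple `(x_1, …, x_l, x_{l+1})` where `x_1 ≤ ⋯ ≤ x_l` are the parts of
`π` in increasing order and `x_{l+1} = t`. -/
def xval {t : ℕ} (π : t.Partition) (i : Fin (π.parts.card + 1)) : ℕ :=
  if (i : ℕ) < π.parts.card then (π.parts.sort (· ≤ ·)).getD (i : ℕ) 0 else t

/-- `f π n` for `n ≥ 2` is the number of left-justified arrays of `n` rows of
nonnegative integers, with rows of lengths `l+1, l+2, …, l+n-1, l+n-1`
(`l = π.parts.card`), such that the first `l` column sums are `x_1, …, x_l`,
every remaining column sum is `t`, and every row sum is `t`.  The array is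
modeled as a function on `Fin n × Fin (l+n-1)` vanishing beyond the row
lengths (row `i`, `0`-based, has length `min (l+i+1) (l+n-1)`).  By
convention `f π 1 = 1` (and `f π 0 = 1`). -/
noncomputable def f {t : ℕ} (π : t.Partition) (n : ℕ) : ℕ :=
  if n ≤ 1 then 1
  else
    Set.ncard {A : Fin n → Fin (π.parts.card + n - 1) → ℕ |
      (∀ (i : Fin n) (j : Fin (π.parts.card + n - 1)),
        min (π.parts.card + (i : ℕ) + 1) (π.parts.card + n - 1) ≤ (j : ℕ) →
          A i j = 0) ∧
      (∀ i : Fin n, ∑ j, A i j = t) ∧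
      (∀ j : Fin (π.parts.card + n - 1),
        ∑ i, A i j =
          if (j : ℕ) < π.parts.card then (π.parts.sort (· ≤ ·)).getD (j : ℕ) 0
          else t)}

/-- `Mcoef π σ` is the number of `(l+1)`-tuples `(y_1, …, y_{l+1})` of
nonnegative integers with `y_i ≤ x_i` for each `i` and `y_1 + ⋯ + y_{l+1} = t`
such that the multiset of nonzero values among `x_1 - y_1, …, x_{l+1} - y_{l+1}`
equals the multiset of parts of `σ`. -/
noncomputable def Mcoef {t : ℕ} (π σ : t.Partition) : ℕ :=
  Set.ncard {y : Fin (π.parts.card + 1) → ℕ |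
    (∀ i, y i ≤ xval π i) ∧ (∑ i, y i = t) ∧
    Multiset.filter (fun z => z ≠ 0)
        (Multiset.map (fun i => xval π i - y i)
          (Finset.univ.val : Multiset (Fin (π.parts.card + 1)))) =
      σ.parts}

namespace FRecAux
open Finset

/-- Clamped `Fin` constructor. -/
def finClamp {c : ℕ} (h : 0 < c) (x : ℕ) : Fin c := ⟨min x (c-1), by omega⟩

lemma finClamp_val {c : ℕ} (h : 0 < c) {x : ℕ} (hx : x < c) : (finClamp h x : ℕ) = x := by
  simp only [finClamp]; omega

lemma sum_getD (Ls : List ℕ) : ∑ i ∈ Finset.range Ls.length, Ls.getD i 0 = Ls.sum := by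
  induction Ls with
  | nil => simp
  | cons a tl ih =>
    rw [List.length_cons, Finset.sum_range_succ']
    simp only [List.getD_cons_succ, List.getD_cons_zero, ih, List.sum_cons]
    omega

lemma sum_fin_truncate {M N : ℕ} (h : M ≤ N) (g : Fin N → ℕ)
    (hg : ∀ j : Fin N, M ≤ (j : ℕ) → g j = 0) :
    ∑ j, g j = ∑ i : Fin M, g (Fin.castLE h i) := by
  classical
  have key : ∀ c : ℕ, ∑ j : Fin c, (fun x : ℕ => if hx : x < N then g ⟨x, hx⟩ else 0) (j : ℕ)
      = ∑ x ∈ Finset.range c, (fun x : ℕ => if hx : x < N then g ⟨x, hx⟩ else 0) x := by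
    intro c; exact Fin.sum_univ_eq_sum_range (fun x : ℕ => if hx : x < N then g ⟨x, hx⟩ else 0) c
  have h1 : ∑ j : Fin N, g j = ∑ x ∈ Finset.range N, (fun x : ℕ => if hx : x < N then g ⟨x, hx⟩ else 0) x := by
    rw [← key N]
    refine Finset.sum_congr rfl fun j _ => ?_
    simp only [j.isLt, dif_pos, Fin.eta]
  have h2 : ∑ x ∈ Finset.range N, (fun x : ℕ => if hx : x < N then g ⟨x, hx⟩ else 0) x
      = ∑ x ∈ Finset.range M, (fun x : ℕ => if hx : x < N then g ⟨x, hx⟩ else 0) x := by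
    refine (Finset.sum_subset (Finset.range_subset_range.2 h) ?_).symm
    intro x hx hnx
    simp only [Finset.mem_range] at hx hnx
    simp only [hx, dif_pos]
    exact hg _ (by simpa using hnx)
  rw [h1, h2, ← key M]
  refine Finset.sum_congr rfl fun i _ => ?_
  have hi : (i : ℕ) < N := lt_of_lt_of_le i.isLt h
  simp only [hi, dif_pos]
  rfl

section Sorting
variable {m : ℕ}

/-- lexicographic-by-(value,index) relation used to sort indices. -/
def relk (r : Fin m → ℕ) (a b : Fin m) : Prop := r a < r b ∨ (r a = r b ∧ (a : ℕ) ≤ (b : ℕ))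

instance (r : Fin m → ℕ) : DecidableRel (relk r) := fun a b => by unfold relk; infer_instance

lemma relk_trans (r : Fin m → ℕ) : ∀ a b c, relk r a b → relk r b c → relk r a c := by
  intro a b c; unfold relk; omega

lemma relk_total (r : Fin m → ℕ) : ∀ a b, relk r a b ∨ relk r b a := by
  intro a b; unfold relk; omega

def slist (r : Fin m → ℕ) : List (Fin m) :=
  List.insertionSort (relk r) ((List.finRange m).filter (fun i => r i != 0))

lemma slist_perm (r : Fin m → ℕ) :
    (slist r).Perm ((List.finRange m).filter (fun i => r i != 0)) :=
  List.perm_insertionSort _ _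

lemma slist_sorted (r : Fin m → ℕ) : (slist r).Pairwise (relk r) := by
  haveI : Std.Total (relk r) := ⟨relk_total r⟩
  haveI : IsTrans (Fin m) (relk r) := ⟨relk_trans r⟩
  exact List.pairwise_insertionSort _ _

lemma slist_nodup (r : Fin m → ℕ) : (slist r).Nodup :=
  ((List.nodup_finRange m).filter _).perm (slist_perm r).symm

lemma mem_slist {r : Fin m → ℕ} {i : Fin m} : i ∈ slist r ↔ r i ≠ 0 := by
  rw [(slist_perm r).mem_iff]
  simp [List.mem_filter]

/-- the multiset of nonzero values of `r`. -/
def mfil (r : Fin m → ℕ) : Multiset ℕ :=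
  Multiset.filter (fun z => z ≠ 0) (Multiset.map r (Finset.univ.val : Multiset (Fin m)))

lemma coe_map_slist (r : Fin m → ℕ) : (((slist r).map r : List ℕ) : Multiset ℕ) = mfil r := by
  have h1 : (((slist r) : List (Fin m)) : Multiset (Fin m))
      = ((List.finRange m).filter (fun i => r i != 0) : List (Fin m)) :=
    Quot.sound (slist_perm r)
  unfold mfil
  rw [← Multiset.map_coe, h1]
  have h2 : ((List.finRange m).filter (fun i => r i != 0) : Multiset (Fin m))
      = Multiset.filter (fun i => r i ≠ 0) (((List.finRange m) : List (Fin m)) : Multiset (Fin m)) := by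
    rw [Multiset.filter_coe]
    congr 1
    refine List.filter_congr fun x _ => ?_
    simp [bne, BEq.beq]
  rw [h2]
  have h3 : (((List.finRange m) : List (Fin m)) : Multiset (Fin m)) = (Finset.univ.val : Multiset (Fin m)) := by
    simp [Finset.univ, Fintype.elems]
  rw [h3, Multiset.filter_map]
  rfl

lemma card_mfil (r : Fin m → ℕ) : Multiset.card (mfil r) = (slist r).length := by
  rw [← coe_map_slist]; simp

lemma map_slist (r : Fin m → ℕ) :
    (slist r).map r = Multiset.sort (mfil r) (· ≤ ·) := by
  refine (fun hp h1 h2 => List.Perm.eq_of_pairwise' (r := ((· ≤ ·) : ℕ → ℕ → Prop)) h1 h2 hp) ?_ ?_ ?_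
  · have : (((slist r).map r : List ℕ) : Multiset ℕ) = ((Multiset.sort (mfil r) (· ≤ ·) : List ℕ) : Multiset ℕ) := by
      rw [coe_map_slist, Multiset.sort_eq]
    exact Quotient.exact this
  · exact List.Pairwise.map r (fun a b h => by unfold relk at h; omega) (slist_sorted r)
  · exact Multiset.pairwise_sort _ _

lemma length_le_card (r : Fin m → ℕ) : (slist r).length ≤ m := by
  have := (slist_nodup r).length_le_card
  simpa using this

end Sorting

section Maps

variable {t : ℕ} (π : t.Partition)

/-- residuals -/
def ry (y : Fin (π.parts.card + 1) → ℕ) : Fin (π.parts.card + 1) → ℕ :=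
  fun i => xval π i - y i

/-- the sorted list of indices with nonzero residual -/
def Ly (y : Fin (π.parts.card + 1) → ℕ) : List (Fin (π.parts.card + 1)) := slist (ry π y)

/-- column map from new indices to old indices -/
def cm (y : Fin (π.parts.card + 1) → ℕ) (j' : ℕ) : ℕ :=
  if h : j' < (Ly π y).length then ((Ly π y).getD j' ⟨0, Nat.succ_pos _⟩ : Fin _)
  else j' + (π.parts.card + 1) - (Ly π y).length

/-- extended residual (`1` beyond the first `l+1` columns) -/
def rext (y : Fin (π.parts.card + 1) → ℕ) (j : ℕ) : ℕ :=
  if h : j < π.parts.card + 1 then ry π y ⟨j, h⟩ else 1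

/-- inverse column map -/
def im (y : Fin (π.parts.card + 1) → ℕ) (j : ℕ) : ℕ :=
  if h : j < π.parts.card + 1 then (Ly π y).idxOf ⟨j, h⟩
  else j + (Ly π y).length - (π.parts.card + 1)

variable (y : Fin (π.parts.card + 1) → ℕ)

lemma len_le : (Ly π y).length ≤ π.parts.card + 1 := length_le_card _

lemma cm_low {j' : ℕ} (h : j' < (Ly π y).length) :
    ∃ hlt : cm π y j' < π.parts.card + 1,
      ry π y ⟨cm π y j', hlt⟩ ≠ 0 ∧ (Ly π y).idxOf ⟨cm π y j', hlt⟩ = j' := by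
  have hval : cm π y j' = ((Ly π y).getD j' ⟨0, Nat.succ_pos _⟩ : Fin (π.parts.card + 1)) := by
    unfold cm; rw [dif_pos h]
  have hg : (Ly π y).getD j' ⟨0, Nat.succ_pos _⟩ = (Ly π y)[j'] := List.getD_eq_getElem _ _ h
  have hlt : cm π y j' < π.parts.card + 1 := hval ▸ ((Ly π y).getD j' ⟨0, Nat.succ_pos _⟩).isLt
  have heq : (⟨cm π y j', hlt⟩ : Fin (π.parts.card + 1)) = (Ly π y)[j'] := by
    apply Fin.ext
    show cm π y j' = ((Ly π y)[j'] : ℕ)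
    rw [hval, hg]
  refine ⟨hlt, ?_, ?_⟩
  · rw [heq]
    exact mem_slist.1 (List.getElem_mem _)
  · rw [heq]
    exact List.Nodup.idxOf_getElem (slist_nodup _) _ _

lemma cm_high {j' : ℕ} (h : (Ly π y).length ≤ j') :
    cm π y j' = j' + (π.parts.card + 1) - (Ly π y).length := by
  unfold cm; rw [dif_neg (by omega)]

lemma cm_lt {k : ℕ} {j' : ℕ} (h : j' < (Ly π y).length + k) :
    cm π y j' < π.parts.card + k + 1 := by
  by_cases hc : j' < (Ly π y).length
  · obtain ⟨hlt, -, -⟩ := cm_low π y hc; omega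
  · rw [cm_high π y (by omega)]
    have := len_le π y; omega

lemma im_cm {k : ℕ} {j' : ℕ} (h : j' < (Ly π y).length + k) : im π y (cm π y j') = j' := by
  by_cases hc : j' < (Ly π y).length
  · obtain ⟨hlt, -, hidx⟩ := cm_low π y hc
    unfold im; rw [dif_pos hlt]; exact hidx
  · have hval := cm_high π y (by omega : (Ly π y).length ≤ j')
    have hl := len_le π y
    unfold im; rw [dif_neg (by omega)]; omega

lemma cm_im {k : ℕ} {j : ℕ} (hj : j < π.parts.card + k + 1) (hne : rext π y j ≠ 0) :
    im π y j < (Ly π y).length + k ∧ cm π y (im π y j) = j := by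
  by_cases hc : j < π.parts.card + 1
  · have hr : ry π y ⟨j, hc⟩ ≠ 0 := by
      unfold rext at hne; rw [dif_pos hc] at hne; exact hne
    have hmem : (⟨j, hc⟩ : Fin (π.parts.card + 1)) ∈ Ly π y := mem_slist.2 hr
    have hidx : (Ly π y).idxOf (⟨j, hc⟩ : Fin (π.parts.card + 1)) < (Ly π y).length :=
      List.idxOf_lt_length_iff.2 hmem
    have him : im π y j = (Ly π y).idxOf (⟨j, hc⟩ : Fin (π.parts.card + 1)) := by
      unfold im; rw [dif_pos hc]
    constructor
    · omega
    · rw [him]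
      unfold cm
      rw [dif_pos (by omega)]
      have := List.getD_eq_getElem (Ly π y) ⟨0, Nat.succ_pos _⟩ (by omega :
        (Ly π y).idxOf (⟨j, hc⟩ : Fin (π.parts.card + 1)) < (Ly π y).length)
      rw [this, List.getElem_idxOf hidx]
  · have hl := len_le π y
    have him : im π y j = j + (Ly π y).length - (π.parts.card + 1) := by
      unfold im; rw [dif_neg hc]
    rw [him, cm_high π y (by omega)]
    omega

lemma rsort {j' : ℕ} (h : j' < (Ly π y).length) (hlt : cm π y j' < π.parts.card + 1) :
    ry π y ⟨cm π y j', hlt⟩ = (Multiset.sort (mfil (ry π y)) (· ≤ ·)).getD j' 0 := by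
  have hlen : j' < ((Ly π y).map (ry π y)).length := by simpa using h
  have hmap := map_slist (ry π y)
  rw [show Ly π y = slist (ry π y) from rfl] at hlen
  rw [← hmap, List.getD_eq_getElem _ _ hlen, List.getElem_map]
  congr 1
  apply Fin.ext
  show cm π y j' = ((slist (ry π y))[j'] : ℕ)
  unfold cm
  rw [dif_pos h, List.getD_eq_getElem _ _ h]
  rfl

lemma rext_cm {k : ℕ} {j' : ℕ} (h : j' < (Ly π y).length + k) :
    rext π y (cm π y j') ≠ 0 := by
  by_cases hc : j' < (Ly π y).length
  · obtain ⟨hlt, hne, -⟩ := cm_low π y hc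
    unfold rext; rw [dif_pos hlt]; exact hne
  · rw [cm_high π y (by omega)]
    have hl := len_le π y
    unfold rext; rw [dif_neg (by omega)]; exact one_ne_zero

end Maps


section Arrays

variable {t : ℕ}

/-- the set of arrays counted by `f` (same formula, any `n`). -/
def Sset (σ : t.Partition) (n : ℕ) : Set (Fin n → Fin (σ.parts.card + n - 1) → ℕ) :=
  {A | (∀ (i : Fin n) (j : Fin (σ.parts.card + n - 1)),
        min (σ.parts.card + (i : ℕ) + 1) (σ.parts.card + n - 1) ≤ (j : ℕ) →
          A i j = 0) ∧
      (∀ i : Fin n, ∑ j, A i j = t) ∧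
      (∀ j : Fin (σ.parts.card + n - 1),
        ∑ i, A i j =
          if (j : ℕ) < σ.parts.card then (σ.parts.sort (· ≤ ·)).getD (j : ℕ) 0
          else t)}

/-- the set of first rows of a given type `σ`. -/
def Yset (π σ : t.Partition) : Set (Fin (π.parts.card + 1) → ℕ) :=
  {y | (∀ i, y i ≤ xval π i) ∧ (∑ i, y i = t) ∧
    Multiset.filter (fun z => z ≠ 0)
        (Multiset.map (fun i => xval π i - y i)
          (Finset.univ.val : Multiset (Fin (π.parts.card + 1)))) =
      σ.parts}

lemma mfil_ry_eq (π : t.Partition) (y : Fin (π.parts.card + 1) → ℕ) :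
    mfil (ry π y) = Multiset.filter (fun z => z ≠ 0)
        (Multiset.map (fun i => xval π i - y i)
          (Finset.univ.val : Multiset (Fin (π.parts.card + 1)))) := rfl

lemma sum_sort_parts (σ : t.Partition) :
    ∑ i ∈ Finset.range σ.parts.card, (σ.parts.sort (· ≤ ·)).getD i 0 = t := by
  have hl : (σ.parts.sort (· ≤ ·)).length = σ.parts.card := σ.parts.length_sort _
  rw [← hl, sum_getD]
  have h2 : ((σ.parts.sort (· ≤ ·) : List ℕ) : Multiset ℕ).sum = σ.parts.sum := by
    rw [Multiset.sort_eq]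
  calc (Multiset.sort σ.parts (· ≤ ·)).sum
      = ((Multiset.sort σ.parts (· ≤ ·) : List ℕ) : Multiset ℕ).sum := rfl
    _ = σ.parts.sum := h2
    _ = t := σ.parts_sum

lemma sum_xval (π : t.Partition) : ∑ i, xval π i = t + t := by
  rw [Fin.sum_univ_castSucc]
  have h1 : xval π (Fin.last _) = t := by
    unfold xval; rw [if_neg (by simp)]
  have h2 : ∀ i : Fin π.parts.card,
      xval π i.castSucc = (fun x : ℕ => (π.parts.sort (· ≤ ·)).getD x 0) (i : ℕ) := by
    intro i; unfold xval; rw [if_pos (by simp [i.isLt])]; rfl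
  rw [h1, Finset.sum_congr rfl (fun i _ => h2 i),
    Fin.sum_univ_eq_sum_range (fun x : ℕ => (π.parts.sort (· ≤ ·)).getD x 0) π.parts.card,
    sum_sort_parts]

section Afacts

variable {π : t.Partition} {k : ℕ} {A : Fin (k+2) → Fin (π.parts.card + k + 1) → ℕ}

/-- the first row of an array, truncated to its first `l+1` entries. -/
def yOf (A : Fin (k+2) → Fin (π.parts.card + k + 1) → ℕ) : Fin (π.parts.card + 1) → ℕ :=
  fun i => A 0 (Fin.castLE (by omega) i)

lemma colsum_eq (hA : A ∈ Sset π (k+2)) (j : Fin (π.parts.card + k + 1))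
    (hj : (j : ℕ) < π.parts.card + 1) :
    ∑ i, A i j = xval π ⟨(j : ℕ), hj⟩ := by
  have h := hA.2.2 j
  unfold xval
  exact h

lemma colsum_t (hA : A ∈ Sset π (k+2)) (j : Fin (π.parts.card + k + 1))
    (hj : π.parts.card + 1 ≤ (j : ℕ)) :
    ∑ i, A i j = t := by
  have h := hA.2.2 j
  rwa [if_neg (by omega)] at h

lemma row0_zero (hA : A ∈ Sset π (k+2)) (j : Fin (π.parts.card + k + 1))
    (hj : π.parts.card + 1 ≤ (j : ℕ)) : A 0 j = 0 := by
  refine hA.1 0 j ?_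
  have : ((0 : Fin (k+2)) : ℕ) = 0 := rfl
  rw [this]
  omega

lemma yOf_le (hA : A ∈ Sset π (k+2)) : ∀ i, yOf A i ≤ xval π i := by
  intro i
  have h1 := colsum_eq hA (Fin.castLE (by omega) i) (by simpa using i.isLt)
  have h2 : A 0 (Fin.castLE (by omega) i) ≤ ∑ i', A i' (Fin.castLE (by omega) i) :=
    Finset.single_le_sum (f := fun i' => A i' (Fin.castLE (by omega) i))
      (fun _ _ => Nat.zero_le _) (Finset.mem_univ 0)
  have h3 : (⟨((Fin.castLE (by omega : π.parts.card + 1 ≤ π.parts.card + k + 1) i : Fin _) : ℕ),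
      by simpa using i.isLt⟩ : Fin (π.parts.card + 1)) = i := by
    apply Fin.ext; rfl
  rw [h3] at h1
  calc yOf A i ≤ ∑ i', A i' (Fin.castLE (by omega) i) := h2
    _ = xval π i := h1

lemma yOf_sum (hA : A ∈ Sset π (k+2)) : ∑ i, yOf A i = t := by
  have h : ∑ j : Fin (π.parts.card + k + 1), A 0 j = t := hA.2.1 0
  rwa [sum_fin_truncate (by omega : π.parts.card + 1 ≤ π.parts.card + k + 1) (A 0)
    (fun j hj => row0_zero hA j hj)] at h

lemma ry_sum (hy1 : ∀ i, (y : Fin (π.parts.card + 1) → ℕ) i ≤ xval π i)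
    (hy2 : ∑ i, y i = t) : ∑ i, ry π y i = t := by
  unfold ry
  rw [Finset.sum_tsub_distrib Finset.univ (fun i _ => hy1 i), sum_xval, hy2]
  omega

lemma mfil_sum (y : Fin (π.parts.card + 1) → ℕ) (hy1 : ∀ i, y i ≤ xval π i)
    (hy2 : ∑ i, y i = t) : (mfil (ry π y)).sum = t := by
  have hsplit := Multiset.filter_add_not (fun z => z ≠ 0)
    (Multiset.map (ry π y) (Finset.univ.val : Multiset (Fin (π.parts.card + 1))))
  have h0 : (Multiset.filter (fun z => ¬ z ≠ 0)
      (Multiset.map (ry π y) (Finset.univ.val : Multiset (Fin (π.parts.card + 1))))).sum = 0 := by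
    apply Multiset.sum_eq_zero
    intro x hx
    have := Multiset.of_mem_filter hx
    simpa using this
  have htot : (Multiset.map (ry π y) (Finset.univ.val : Multiset (Fin (π.parts.card + 1)))).sum = t := by
    have : (Multiset.map (ry π y) (Finset.univ.val : Multiset (Fin (π.parts.card + 1)))).sum
        = ∑ i, ry π y i := rfl
    rw [this]
    exact ry_sum hy1 hy2
  have := congrArg Multiset.sum hsplit
  rw [Multiset.sum_add, h0] at this
  unfold mfil
  omega

/-- the partition given by the nonzero residuals of the first row. -/
def typeOf (A : ↥(Sset π (k+2))) : t.Partition :=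
  { parts := mfil (ry π (yOf A.1)),
    parts_pos := fun hz => Nat.pos_of_ne_zero (by
      have := Multiset.of_mem_filter hz
      simpa using this),
    parts_sum := mfil_sum (yOf A.1) (yOf_le A.2) (yOf_sum A.2) }

lemma drop_zero (hA : A ∈ Sset π (k+2)) (i' : Fin (k+1)) (j : Fin (π.parts.card + k + 1))
    (h0 : rext π (yOf A) (j : ℕ) = 0) : A i'.succ j = 0 := by
  have hj : (j : ℕ) < π.parts.card + 1 := by
    by_contra hc
    unfold rext at h0
    rw [dif_neg hc] at h0
    exact one_ne_zero h0
  have hr : ry π (yOf A) ⟨(j : ℕ), hj⟩ = 0 := by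
    unfold rext at h0
    rwa [dif_pos hj] at h0
  have hy : yOf A ⟨(j : ℕ), hj⟩ = xval π ⟨(j : ℕ), hj⟩ := by
    have := yOf_le hA ⟨(j : ℕ), hj⟩
    unfold ry at hr
    omega
  have hcast : Fin.castLE (by omega : π.parts.card + 1 ≤ π.parts.card + k + 1)
      (⟨(j : ℕ), hj⟩ : Fin (π.parts.card + 1)) = j := by
    apply Fin.ext; rfl
  have hA0 : A 0 j = xval π ⟨(j : ℕ), hj⟩ := by
    rw [← hy]
    unfold yOf
    rw [hcast]
  have hcol := colsum_eq hA j hj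
  rw [Fin.sum_univ_succ] at hcol
  have hrest : ∑ i' : Fin (k+1), A i'.succ j = 0 := by omega
  exact Finset.sum_eq_zero_iff.1 hrest i' (Finset.mem_univ _)

end Afacts

lemma parts_card_pos {t : ℕ} (ht : 1 ≤ t) (σ : t.Partition) : 0 < σ.parts.card := by
  by_contra h
  have h0 : σ.parts = 0 := by
    have := Nat.eq_zero_of_not_pos h
    simpa [Multiset.card_eq_zero] using this
  have := σ.parts_sum
  rw [h0] at this
  simp at this
  omega

section Main

variable {t : ℕ} {π : t.Partition} {k : ℕ}

/-- the sub-array (with sorted columns, zero residual columns dropped). -/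
def Bof (σ : t.Partition) (A : Fin (k+2) → Fin (π.parts.card + k + 1) → ℕ) :
    Fin (k+1) → Fin (σ.parts.card + k) → ℕ :=
  fun i' j' => A i'.succ (finClamp (Nat.succ_pos _) (cm π (yOf A) (j' : ℕ)))

/-- reconstruction of the array from the first row and the sub-array. -/
def Aof (σ : t.Partition) (hc : 0 < σ.parts.card + k) (y : Fin (π.parts.card + 1) → ℕ)
    (B : Fin (k+1) → Fin (σ.parts.card + k) → ℕ) :
    Fin (k+2) → Fin (π.parts.card + k + 1) → ℕ :=
  Fin.cases (fun j => if h : (j : ℕ) < π.parts.card + 1 then y ⟨(j : ℕ), h⟩ else 0)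
    (fun i' j => if rext π y (j : ℕ) = 0 then 0 else B i' (finClamp hc (im π y (j : ℕ))))

lemma Aof_zero (σ : t.Partition) (hc : 0 < σ.parts.card + k) (y : Fin (π.parts.card + 1) → ℕ)
    (B : Fin (k+1) → Fin (σ.parts.card + k) → ℕ) (j : Fin (π.parts.card + k + 1)) :
    Aof σ hc y B 0 j = if h : (j : ℕ) < π.parts.card + 1 then y ⟨(j : ℕ), h⟩ else 0 := by
  unfold Aof
  rw [Fin.cases_zero]

lemma Aof_succ (σ : t.Partition) (hc : 0 < σ.parts.card + k) (y : Fin (π.parts.card + 1) → ℕ)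
    (B : Fin (k+1) → Fin (σ.parts.card + k) → ℕ) (i' : Fin (k+1)) (j : Fin (π.parts.card + k + 1)) :
    Aof σ hc y B i'.succ j
      = if rext π y (j : ℕ) = 0 then 0 else B i' (finClamp hc (im π y (j : ℕ))) := by
  unfold Aof
  rw [Fin.cases_succ]

lemma sum_cm (σ : t.Partition) (hc : 0 < σ.parts.card + k) (y : Fin (π.parts.card + 1) → ℕ)
    (hlen : (Ly π y).length = σ.parts.card) (g : Fin (π.parts.card + k + 1) → ℕ) :
    ∑ j' : Fin (σ.parts.card + k), g (finClamp (Nat.succ_pos _) (cm π y (j' : ℕ)))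
      = ∑ j ∈ Finset.univ.filter (fun j : Fin (π.parts.card + k + 1) => rext π y (j : ℕ) ≠ 0), g j := by
  refine Finset.sum_nbij'
    (i := fun j' : Fin (σ.parts.card + k) => finClamp (Nat.succ_pos _) (cm π y (j' : ℕ)))
    (j := fun j : Fin (π.parts.card + k + 1) => finClamp hc (im π y (j : ℕ)))
    ?_ ?_ ?_ ?_ ?_
  · intro j' _
    rw [Finset.mem_filter]
    refine ⟨Finset.mem_univ _, ?_⟩
    rw [finClamp_val _ (cm_lt π y (by rw [hlen]; exact j'.isLt))]
    exact rext_cm π y (by rw [hlen]; exact j'.isLt)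
  · intro j _
    exact Finset.mem_univ _
  · intro j' _
    have hj' : (j' : ℕ) < (Ly π y).length + k := by rw [hlen]; exact j'.isLt
    apply Fin.ext
    rw [finClamp_val _ (cm_lt π y hj'), im_cm π y hj', finClamp_val hc j'.isLt]
  · intro j hj
    rw [Finset.mem_filter] at hj
    obtain ⟨him, hcm⟩ := cm_im π y j.isLt hj.2
    apply Fin.ext
    rw [finClamp_val hc (by omega), hcm, finClamp_val _ j.isLt]
  · intro j' _
    rfl

variable {σ : t.Partition}

lemma hlen_of (hτ : mfil (ry π y) = σ.parts) : (Ly π y).length = σ.parts.card := by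
  rw [← hτ]
  exact (card_mfil _).symm

section Forward

variable {A : Fin (k+2) → Fin (π.parts.card + k + 1) → ℕ}

lemma yOf_mem (hA : A ∈ Sset π (k+2)) (hτ : mfil (ry π (yOf A)) = σ.parts) :
    yOf A ∈ Yset π σ := by
  refine ⟨yOf_le hA, yOf_sum hA, ?_⟩
  rw [← mfil_ry_eq]
  exact hτ

lemma Bof_mem (hA : A ∈ Sset π (k+2)) (hτ : mfil (ry π (yOf A)) = σ.parts)
    (hc : 0 < σ.parts.card + k) :
    Bof σ A ∈ Sset σ (k+1) := by
  have hlen := hlen_of hτ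
  have hle := len_le π (yOf A)
  refine ⟨?_, ?_, ?_⟩
  · -- support
    intro i' j' hmin
    have hj' : (j' : ℕ) < σ.parts.card + k := j'.isLt
    have hge : σ.parts.card + (i' : ℕ) + 1 ≤ (j' : ℕ) := by omega
    have hcm := cm_high π (yOf A) (by omega : (Ly π (yOf A)).length ≤ (j' : ℕ))
    have hlt : cm π (yOf A) (j' : ℕ) < π.parts.card + k + 1 := cm_lt π (yOf A) (by omega)
    refine hA.1 i'.succ _ ?_
    rw [finClamp_val _ hlt, Fin.val_succ, hcm]
    omega
  · -- row sums
    intro i'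
    have base : ∑ j : Fin (π.parts.card + k + 1), A i'.succ j = t := hA.2.1 i'.succ
    calc ∑ j' : Fin (σ.parts.card + k), Bof σ A i' j'
        = ∑ j ∈ Finset.univ.filter
            (fun j : Fin (π.parts.card + k + 1) => rext π (yOf A) (j : ℕ) ≠ 0), A i'.succ j :=
          sum_cm σ hc (yOf A) hlen (A i'.succ)
      _ = ∑ j : Fin (π.parts.card + k + 1), A i'.succ j := by
          refine Finset.sum_subset (Finset.filter_subset _ _) ?_
          intro j _ hj
          have h0 : rext π (yOf A) (j : ℕ) = 0 := by
            by_contra hne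
            exact hj (Finset.mem_filter.2 ⟨Finset.mem_univ _, hne⟩)
          exact drop_zero hA i' j h0
      _ = t := base
  · -- column sums
    intro j'
    have hj' : (j' : ℕ) < σ.parts.card + k := j'.isLt
    have hlt : cm π (yOf A) (j' : ℕ) < π.parts.card + k + 1 := cm_lt π (yOf A) (by omega)
    set J : Fin (π.parts.card + k + 1) := finClamp (Nat.succ_pos _) (cm π (yOf A) (j' : ℕ)) with hJ
    have hJval : (J : ℕ) = cm π (yOf A) (j' : ℕ) := finClamp_val _ hlt
    have hB : ∀ i'' : Fin (k+1), Bof σ A i'' j' = A i''.succ J := fun _ => rfl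
    have hsplit : ∑ i : Fin (k+2), A i J = A 0 J + ∑ i'' : Fin (k+1), A i''.succ J :=
      Fin.sum_univ_succ _
    rw [Finset.sum_congr rfl (fun i'' _ => hB i'')]
    by_cases hcase : (j' : ℕ) < σ.parts.card
    · obtain ⟨hlt1, hne1, -⟩ := cm_low π (yOf A) (show (j' : ℕ) < (Ly π (yOf A)).length by omega)
      have hjJ : (J : ℕ) < π.parts.card + 1 := by omega
      have hsum : ∑ i, A i J = xval π ⟨(J : ℕ), hjJ⟩ := colsum_eq hA J hjJ
      have heJ : (⟨(J : ℕ), hjJ⟩ : Fin (π.parts.card + 1)) = ⟨cm π (yOf A) (j' : ℕ), hlt1⟩ :=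
        Fin.ext hJval
      have hA0 : A 0 J = yOf A ⟨(J : ℕ), hjJ⟩ := by
        have hc2 : Fin.castLE (by omega : π.parts.card + 1 ≤ π.parts.card + k + 1)
            (⟨(J : ℕ), hjJ⟩ : Fin (π.parts.card + 1)) = J := Fin.ext rfl
        show A 0 J = A 0 (Fin.castLE (by omega) (⟨(J : ℕ), hjJ⟩ : Fin (π.parts.card + 1)))
        rw [hc2]
      have hry : ry π (yOf A) ⟨cm π (yOf A) (j' : ℕ), hlt1⟩
          = (Multiset.sort (mfil (ry π (yOf A))) (· ≤ ·)).getD (j' : ℕ) 0 :=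
        rsort π (yOf A) (by omega) hlt1
      have hyle := yOf_le hA ⟨(J : ℕ), hjJ⟩
      rw [hτ] at hry
      rw [if_pos hcase]
      rw [heJ] at hA0 hyle hsum
      have hrydef : ry π (yOf A) ⟨cm π (yOf A) (j' : ℕ), hlt1⟩
          = xval π ⟨cm π (yOf A) (j' : ℕ), hlt1⟩ - yOf A ⟨cm π (yOf A) (j' : ℕ), hlt1⟩ := rfl
      omega
    · have hni : (Ly π (yOf A)).length ≤ (j' : ℕ) := by omega
      have hcm := cm_high π (yOf A) hni
      have hge : π.parts.card + 1 ≤ (J : ℕ) := by rw [hJval, hcm]; omega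
      have hsum := colsum_t hA J hge
      have hA0 : A 0 J = 0 := row0_zero hA J hge
      rw [if_neg hcase]
      omega

end Forward

section Backward

variable {y : Fin (π.parts.card + 1) → ℕ} {B : Fin (k+1) → Fin (σ.parts.card + k) → ℕ}

lemma Aof_mem (hc : 0 < σ.parts.card + k) (hy : y ∈ Yset π σ) (hB : B ∈ Sset σ (k+1)) :
    Aof σ hc y B ∈ Sset π (k+2) := by
  obtain ⟨hy1, hy2, hy3⟩ := hy
  have hτ : mfil (ry π y) = σ.parts := by rw [mfil_ry_eq]; exact hy3
  have hlen := hlen_of hτ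
  have hle := len_le π y
  refine ⟨?_, ?_, ?_⟩
  · -- support
    intro i j hmin
    induction i using Fin.cases with
    | zero =>
      have h0 : ((0 : Fin (k+2)) : ℕ) = 0 := rfl
      rw [h0] at hmin
      rw [Aof_zero, dif_neg (by omega)]
    | succ i' =>
      rw [Aof_succ]
      by_cases h0 : rext π y (j : ℕ) = 0
      · rw [if_pos h0]
      · rw [if_neg h0]
        rw [Fin.val_succ] at hmin
        have hjlt : (j : ℕ) < π.parts.card + k + 1 := j.isLt
        have hj1 : π.parts.card + 1 ≤ (j : ℕ) := by
          by_contra hcon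
          have hrr : rext π y (j : ℕ) = ry π y ⟨(j : ℕ), by omega⟩ := by
            unfold rext; rw [dif_pos (by omega)]
          omega
        have him : im π y (j : ℕ) = (j : ℕ) + (Ly π y).length - (π.parts.card + 1) := by
          unfold im; rw [dif_neg (by omega)]
        refine hB.1 i' _ ?_
        rw [finClamp_val hc (by omega)]
        omega
  · -- row sums
    intro i
    induction i using Fin.cases with
    | zero =>
      show ∑ j : Fin (π.parts.card + k + 1), Aof σ hc y B 0 j = t
      have hz : ∀ j : Fin (π.parts.card + k + 1), π.parts.card + 1 ≤ (j : ℕ) →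
          Aof σ hc y B 0 j = 0 := by
        intro j hj; rw [Aof_zero, dif_neg (by omega)]
      have hcast : ∀ i : Fin (π.parts.card + 1),
          Aof σ hc y B 0 (Fin.castLE (by omega) i) = y i := by
        intro i
        rw [Aof_zero, dif_pos (by simpa using i.isLt)]
        exact congrArg y (Fin.ext rfl)
      rw [sum_fin_truncate (by omega : π.parts.card + 1 ≤ π.parts.card + k + 1) _ hz,
        Finset.sum_congr rfl (fun i _ => hcast i)]
      exact hy2
    | succ i' =>
      show ∑ j : Fin (π.parts.card + k + 1), Aof σ hc y B i'.succ j = t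
      have hbase : ∑ j' : Fin (σ.parts.card + k), B i' j' = t := hB.2.1 i'
      calc ∑ j : Fin (π.parts.card + k + 1), Aof σ hc y B i'.succ j
          = ∑ j ∈ Finset.univ.filter
              (fun j : Fin (π.parts.card + k + 1) => rext π y (j : ℕ) ≠ 0),
              Aof σ hc y B i'.succ j := by
            refine (Finset.sum_subset (Finset.filter_subset _ _) ?_).symm
            intro j _ hj
            have h0 : rext π y (j : ℕ) = 0 := by
              by_contra hne
              exact hj (Finset.mem_filter.2 ⟨Finset.mem_univ _, hne⟩)
            rw [Aof_succ, if_pos h0]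
        _ = ∑ j' : Fin (σ.parts.card + k),
              Aof σ hc y B i'.succ (finClamp (Nat.succ_pos _) (cm π y (j' : ℕ))) :=
            (sum_cm σ hc y hlen _).symm
        _ = ∑ j' : Fin (σ.parts.card + k), B i' j' := by
            refine Finset.sum_congr rfl fun j' _ => ?_
            have hj' : (j' : ℕ) < (Ly π y).length + k := by rw [hlen]; exact j'.isLt
            rw [Aof_succ,
              if_neg (by rw [finClamp_val _ (cm_lt π y hj')]; exact rext_cm π y hj')]
            congr 1
            apply Fin.ext
            rw [finClamp_val _ (cm_lt π y hj'), im_cm π y hj', finClamp_val hc j'.isLt]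
        _ = t := hbase
  · -- column sums
    intro j
    show ∑ i : Fin (k+2), Aof σ hc y B i j = _
    have hsplit : ∑ i : Fin (k+2), Aof σ hc y B i j
        = Aof σ hc y B 0 j + ∑ i' : Fin (k+1), Aof σ hc y B i'.succ j :=
      Fin.sum_univ_succ _
    have hjlt : (j : ℕ) < π.parts.card + k + 1 := j.isLt
    by_cases hj1 : (j : ℕ) < π.parts.card + 1
    · have hgoal : (if (j : ℕ) < π.parts.card then (π.parts.sort (· ≤ ·)).getD (j : ℕ) 0 else t)
          = xval π ⟨(j : ℕ), hj1⟩ := rfl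
      rw [hsplit, hgoal]
      have hA0 : Aof σ hc y B 0 j = y ⟨(j : ℕ), hj1⟩ := by rw [Aof_zero, dif_pos hj1]
      have hyle := hy1 ⟨(j : ℕ), hj1⟩
      have hrd : ry π y ⟨(j : ℕ), hj1⟩ = xval π ⟨(j : ℕ), hj1⟩ - y ⟨(j : ℕ), hj1⟩ := rfl
      by_cases hr0 : ry π y ⟨(j : ℕ), hj1⟩ = 0
      · have hrext : rext π y (j : ℕ) = 0 := by unfold rext; rw [dif_pos hj1]; exact hr0
        have hzero : ∑ i' : Fin (k+1), Aof σ hc y B i'.succ j = 0 :=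
          Finset.sum_eq_zero (fun i' _ => by rw [Aof_succ, if_pos hrext])
        omega
      · have hrext : rext π y (j : ℕ) ≠ 0 := by unfold rext; rw [dif_pos hj1]; exact hr0
        obtain ⟨him1, hcm1⟩ := cm_im π y (k := k) j.isLt hrext
        have himlow : im π y (j : ℕ) < (Ly π y).length := by
          unfold im
          rw [dif_pos hj1]
          exact List.idxOf_lt_length_iff.2 (mem_slist.2 hr0)
        have hsum2 : ∑ i' : Fin (k+1), Aof σ hc y B i'.succ j
            = ∑ i' : Fin (k+1), B i' (finClamp hc (im π y (j : ℕ))) :=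
          Finset.sum_congr rfl (fun i' _ => by rw [Aof_succ, if_neg hrext])
        have hcol : ∑ i' : Fin (k+1), B i' (finClamp hc (im π y (j : ℕ)))
            = (σ.parts.sort (· ≤ ·)).getD (im π y (j : ℕ)) 0 := by
          have h := hB.2.2 (finClamp hc (im π y (j : ℕ)))
          rw [finClamp_val hc (by omega)] at h
          rwa [if_pos (by omega)] at h
        have hlt2 : cm π y (im π y (j : ℕ)) < π.parts.card + 1 := by rw [hcm1]; exact hj1
        have hry := rsort π y himlow hlt2
        rw [hτ] at hry
        have heq : (⟨cm π y (im π y (j : ℕ)), hlt2⟩ : Fin (π.parts.card + 1))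
            = ⟨(j : ℕ), hj1⟩ := Fin.ext hcm1
        rw [heq] at hry
        omega
    · have hA0 : Aof σ hc y B 0 j = 0 := by rw [Aof_zero, dif_neg hj1]
      have hrext : rext π y (j : ℕ) ≠ 0 := by
        unfold rext; rw [dif_neg hj1]; exact one_ne_zero
      have him : im π y (j : ℕ) = (j : ℕ) + (Ly π y).length - (π.parts.card + 1) := by
        unfold im; rw [dif_neg hj1]
      have hsum2 : ∑ i' : Fin (k+1), Aof σ hc y B i'.succ j
          = ∑ i' : Fin (k+1), B i' (finClamp hc (im π y (j : ℕ))) :=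
        Finset.sum_congr rfl (fun i' _ => by rw [Aof_succ, if_neg hrext])
      have hcol : ∑ i' : Fin (k+1), B i' (finClamp hc (im π y (j : ℕ))) = t := by
        have h := hB.2.2 (finClamp hc (im π y (j : ℕ)))
        rw [finClamp_val hc (by omega)] at h
        rwa [if_neg (by omega)] at h
      rw [hsplit, if_neg (by omega)]
      omega

lemma yOf_Aof (hc : 0 < σ.parts.card + k) :
    yOf (Aof σ hc y B) = y := by
  funext i
  show Aof σ hc y B 0 (Fin.castLE (by omega) i) = y i
  rw [Aof_zero, dif_pos (by simpa using i.isLt)]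
  exact congrArg y (Fin.ext rfl)

lemma Aof_Bof {A : Fin (k+2) → Fin (π.parts.card + k + 1) → ℕ} (hA : A ∈ Sset π (k+2))
    (hτ : mfil (ry π (yOf A)) = σ.parts) (hc : 0 < σ.parts.card + k) :
    Aof σ hc (yOf A) (Bof σ A) = A := by
  have hlen := hlen_of hτ
  have hle := len_le π (yOf A)
  funext i j
  induction i using Fin.cases with
  | zero =>
    rw [Aof_zero]
    by_cases hj1 : (j : ℕ) < π.parts.card + 1
    · rw [dif_pos hj1]
      show A 0 (Fin.castLE (by omega) (⟨(j : ℕ), hj1⟩ : Fin (π.parts.card + 1))) = A 0 j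
      rfl
    · rw [dif_neg hj1]
      exact (row0_zero hA j (by omega)).symm
  | succ i' =>
    rw [Aof_succ]
    by_cases h0 : rext π (yOf A) (j : ℕ) = 0
    · rw [if_pos h0]
      exact (drop_zero hA i' j h0).symm
    · rw [if_neg h0]
      obtain ⟨him1, hcm1⟩ := cm_im π (yOf A) (k := k) j.isLt h0
      show A i'.succ (finClamp (Nat.succ_pos _)
        (cm π (yOf A) ((finClamp hc (im π (yOf A) (j : ℕ)) : Fin _) : ℕ))) = A i'.succ j
      congr 1
      apply Fin.ext
      rw [finClamp_val hc (by omega), finClamp_val _ (by rw [hcm1]; exact j.isLt), hcm1]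

lemma Bof_Aof (hc : 0 < σ.parts.card + k) (hy : y ∈ Yset π σ) :
    Bof σ (Aof σ hc y B) = B := by
  have hτ : mfil (ry π y) = σ.parts := by rw [mfil_ry_eq]; exact hy.2.2
  have hlen := hlen_of hτ
  funext i' j'
  show Aof σ hc y B i'.succ
    (finClamp (Nat.succ_pos _) (cm π (yOf (Aof σ hc y B)) (j' : ℕ))) = B i' j'
  rw [yOf_Aof hc]
  have hj' : (j' : ℕ) < (Ly π y).length + k := by rw [hlen]; exact j'.isLt
  rw [Aof_succ, if_neg (by rw [finClamp_val _ (cm_lt π y hj')]; exact rext_cm π y hj')]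
  congr 1
  apply Fin.ext
  rw [finClamp_val _ (cm_lt π y hj'), im_cm π y hj', finClamp_val hc j'.isLt]

end Backward

lemma typeOf_Aof (hc : 0 < σ.parts.card + k) (hy : y ∈ Yset π σ)
    (hmem : Aof σ hc y B ∈ Sset π (k+2)) :
    typeOf (⟨Aof σ hc y B, hmem⟩ : ↥(Sset π (k+2))) = σ := by
  apply Nat.Partition.ext
  show mfil (ry π (yOf (Aof σ hc y B))) = σ.parts
  rw [yOf_Aof hc, mfil_ry_eq]
  exact hy.2.2

noncomputable def FGto (ht : 1 ≤ t) (σ : t.Partition)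
    (AA : {A : ↥(Sset π (k+2)) // typeOf A = σ}) :
    ↥(Yset π σ) × ↥(Sset σ (k+1)) :=
  (⟨yOf AA.1.1, yOf_mem AA.1.2 (congrArg Nat.Partition.parts AA.2)⟩,
   ⟨Bof σ AA.1.1, Bof_mem AA.1.2 (congrArg Nat.Partition.parts AA.2)
     (by have := parts_card_pos ht σ; omega)⟩)

noncomputable def FGinv (ht : 1 ≤ t) (σ : t.Partition)
    (p : ↥(Yset π σ) × ↥(Sset σ (k+1))) :
    {A : ↥(Sset π (k+2)) // typeOf A = σ} :=
  ⟨⟨Aof σ (by have := parts_card_pos ht σ; omega) p.1.1 p.2.1,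
    Aof_mem _ p.1.2 p.2.2⟩,
   typeOf_Aof _ p.1.2 _⟩

lemma FG_left (ht : 1 ≤ t) (σ : t.Partition)
    (AA : {A : ↥(Sset π (k+2)) // typeOf A = σ}) :
    FGinv ht σ (FGto ht σ AA) = AA := by
  apply Subtype.ext
  apply Subtype.ext
  show Aof σ _ (yOf AA.1.1) (Bof σ AA.1.1) = AA.1.1
  exact Aof_Bof AA.1.2 (congrArg Nat.Partition.parts AA.2) _

lemma FG_right (ht : 1 ≤ t) (σ : t.Partition)
    (p : ↥(Yset π σ) × ↥(Sset σ (k+1))) :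
    FGto ht σ (FGinv ht σ p) = p := by
  obtain ⟨⟨y, hy⟩, ⟨B, hB⟩⟩ := p
  simp only [FGto, FGinv, Prod.mk.injEq, Subtype.mk.injEq]
  exact ⟨yOf_Aof _, Bof_Aof _ hy⟩

/-- the fiber of arrays whose first row has type `σ` is equivalent to
(first rows of type `σ`) × (arrays for `σ` with one less row). -/
noncomputable def fibEquiv (ht : 1 ≤ t) (σ : t.Partition) :
    {A : ↥(Sset π (k+2)) // typeOf A = σ} ≃ ↥(Yset π σ) × ↥(Sset σ (k+1)) :=
  ⟨FGto ht σ, FGinv ht σ, FG_left ht σ, FG_right ht σ⟩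

end Main

lemma Yset_finite (π σ : t.Partition) : (Yset π σ).Finite := by
  apply Set.Finite.subset (Set.Finite.pi (fun i => Set.finite_Iic (xval π i)))
  intro y hy i _
  exact hy.1 i

lemma Sset_finite (σ : t.Partition) (n : ℕ) : (Sset σ n).Finite := by
  apply Set.Finite.subset
    (Set.Finite.pi (fun _ => Set.Finite.pi (fun _ => Set.finite_Iic t)))
  intro A hA i _ j _
  show A i j ≤ t
  have h := hA.2.1 i
  calc A i j ≤ ∑ j', A i j' :=
        Finset.single_le_sum (fun _ _ => Nat.zero_le _) (Finset.mem_univ j)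
    _ = t := h

lemma card_S (ht : 1 ≤ t) (π : t.Partition) (k : ℕ) :
    (Sset π (k+2)).ncard = ∑ σ : t.Partition, (Yset π σ).ncard * (Sset σ (k+1)).ncard := by
  classical
  haveI : Finite ↥(Sset π (k+2)) := (Sset_finite π (k+2)).to_subtype
  have e := (Equiv.sigmaFiberEquiv (fun A : ↥(Sset π (k+2)) => typeOf A)).symm
  have h1 : (Sset π (k+2)).ncard = Nat.card ↥(Sset π (k+2)) := (Nat.card_coe_set_eq _).symm
  rw [h1, Nat.card_congr e]
  haveI inst : ∀ σ : t.Partition, Fintype {A : ↥(Sset π (k+2)) // typeOf A = σ} :=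
    fun σ => Fintype.ofFinite _
  rw [Nat.card_eq_fintype_card, Fintype.card_sigma]
  refine Finset.sum_congr rfl fun σ _ => ?_
  have h2 : Fintype.card {A : ↥(Sset π (k+2)) // typeOf A = σ}
      = Nat.card {A : ↥(Sset π (k+2)) // typeOf A = σ} := (Nat.card_eq_fintype_card).symm
  rw [h2, Nat.card_congr (fibEquiv ht σ), Nat.card_prod,
    Nat.card_coe_set_eq, Nat.card_coe_set_eq]

lemma Sset_one (σ : t.Partition) :
    Sset σ 1 = {fun (_ : Fin 1) (j : Fin (σ.parts.card + 1 - 1)) =>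
      (σ.parts.sort (· ≤ ·)).getD ((j : ℕ)) 0} := by
  apply Set.eq_of_subset_of_subset
  · intro A hA
    simp only [Set.mem_singleton_iff]
    funext i j
    have h0 : i = 0 := Subsingleton.elim i 0
    have h := hA.2.2 j
    rw [if_pos (show (j : ℕ) < σ.parts.card from j.isLt)] at h
    rw [Fin.sum_univ_one] at h
    rw [h0]
    exact h
  · intro A hA
    rw [Set.mem_singleton_iff] at hA
    subst hA
    refine ⟨?_, ?_, ?_⟩
    · intro i j hmin
      exfalso
      have hj : (j : ℕ) < σ.parts.card + 1 - 1 := j.isLt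
      omega
    · intro i
      show ∑ j : Fin σ.parts.card, (σ.parts.sort (· ≤ ·)).getD ((j : ℕ)) 0 = t
      rw [Fin.sum_univ_eq_sum_range (fun x => (σ.parts.sort (· ≤ ·)).getD x 0)]
      exact sum_sort_parts σ
    · intro j
      rw [Fin.sum_univ_one, if_pos (show (j : ℕ) < σ.parts.card from j.isLt)]

lemma f_eq_ncard (σ : t.Partition) {n : ℕ} (hn : 1 ≤ n) : f σ n = (Sset σ n).ncard := by
  rcases Nat.lt_or_ge n 2 with h | h
  · have hn1 : n = 1 := by omega
    subst hn1
    unfold f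
    rw [if_pos (by omega), Sset_one]
    exact (Set.ncard_singleton _).symm
  · unfold f
    rw [if_neg (by omega)]
    rfl

end Arrays

end FRecAux

/-- For every partition `π` of `t ≥ 1` and every `n ≥ 2`,
`f π n = ∑_σ Mcoef π σ * f σ (n-1)`, the sum being over all partitions `σ`
of `t`. -/
theorem f_recurrence (t : ℕ) (ht : 1 ≤ t) (π : t.Partition) (n : ℕ)
    (hn : 2 ≤ n) :
    f π n = ∑ σ : t.Partition, Mcoef π σ * f σ (n - 1) := by
  obtain ⟨k, rfl⟩ : ∃ k, n = k + 2 := ⟨n - 2, by omega⟩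
  rw [FRecAux.f_eq_ncard π (by omega : 1 ≤ k + 2), FRecAux.card_S ht π k]
  refine Finset.sum_congr rfl fun σ _ => ?_
  have h1 : Mcoef π σ = (FRecAux.Yset π σ).ncard := rfl
  have h2 : f σ (k + 2 - 1) = (FRecAux.Sset σ (k+1)).ncard := FRecAux.f_eq_ncard σ (by omega : 1 ≤ k + 1)
  rw [h1, h2]
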